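/- For all integers n ≥ m ≥ 2 and every integer k with m^n − m^(n−2) < k < m^n, the number of fuzzy bitopological spaces on an n-element set X with membership values in an m-element chain M in which both fuzzy topologies have exactly k open sets is (τᵢ, τⱼ)_F(n, m, k) = 0. -/
import Mathlib


/-- A fuzzy topology on `Fin n` with membership values in the `m`-element chain `Fin m`:
a collection of fuzzy sets (functions `Fin n → Fin m`) containing the constant function
with the least value, the constant function with the greatest value, and closed under
pointwise (binary) supremum and infimum. -/
def IsFuzzyTopology {n m : ℕ} (hm : m ≠ 0) (τ : Finset (Fin n → Fin m)) : Prop :=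
  (fun _ => (⟨0, Nat.pos_of_ne_zero hm⟩ : Fin m)) ∈ τ ∧
  (fun _ => (⟨m - 1, by omega⟩ : Fin m)) ∈ τ ∧
  (∀ f ∈ τ, ∀ g ∈ τ, f ⊔ g ∈ τ) ∧
  (∀ f ∈ τ, ∀ g ∈ τ, f ⊓ g ∈ τ)

/-- `tauF n m k hm` is the number of fuzzy topologies on an `n`-element set with values in an
`m`-element chain having exactly `k` open sets. -/
noncomputable def tauF (n m k : ℕ) (hm : m ≠ 0) : ℕ :=
  Nat.card {τ : Finset (Fin n → Fin m) // IsFuzzyTopology hm τ ∧ τ.card = k}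

/-- `biTauF n m k hm` is the number of fuzzy bitopological spaces (unordered pairs of fuzzy
topologies, allowing equal ones) on an `n`-element set with values in an `m`-element chain in
which both topologies have exactly `k` open sets. -/
noncomputable def biTauF (n m k : ℕ) (hm : m ≠ 0) : ℕ :=
  Nat.card (Sym2 {τ : Finset (Fin n → Fin m) // IsFuzzyTopology hm τ ∧ τ.card = k})

lemma topology_card (n m : ℕ) (hm : 2 ≤ m) (hn : 2 ≤ n)
    (τ : Finset (Fin n → Fin m)) (hτ : IsFuzzyTopology (show m ≠ 0 by omega) τ) :
    τ.card = m ^ n ∨ τ.card ≤ m ^ n - m ^ (n - 2) := by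
  have hmn : m ≠ 0 := by omega
  set zero : Fin m := ⟨0, by omega⟩ with hzero
  have hzle : ∀ v : Fin m, zero ≤ v := fun v => by
    simp [hzero, Fin.le_def]
  have : Nontrivial (Fin n) := Fin.nontrivial_iff_two_le.mpr hn
  by_cases hfull : ∀ x y : Fin n, x ≠ y → ∀ a b : Fin m, ∃ f ∈ τ, f x = a ∧ f y = b
  · left
    have htu : τ = Finset.univ := by
      apply Finset.eq_univ_of_forall
      intro g
      have key : ∀ x y : Fin n, ∃ f ∈ τ, (x ≠ y → f x = g x ∧ f y = zero) := by
        intro x y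
        by_cases h : x = y
        · exact ⟨_, hτ.1, fun h' => absurd h h'⟩
        · obtain ⟨f, hf, h1, h2⟩ := hfull x y h (g x) zero
          exact ⟨f, hf, fun _ => ⟨h1, h2⟩⟩
      choose F hFτ hFval using key
      have he : ∀ x : Fin n, (Finset.univ.erase x).Nonempty := by
        intro x
        obtain ⟨y, hy⟩ := exists_ne x
        exact ⟨y, Finset.mem_erase.mpr ⟨hy, Finset.mem_univ y⟩⟩
      set h : Fin n → (Fin n → Fin m) := fun x => (Finset.univ.erase x).inf' (he x) (F x)
        with hh
      have hhτ : ∀ x, h x ∈ τ := by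
        intro x
        exact Finset.inf'_mem (↑τ) (fun a ha b hb => hτ.2.2.2 a ha b hb) _ _ _
          (fun y _ => hFτ x y)
      have hhx : ∀ x, h x x = g x := by
        intro x
        rw [hh]
        simp only
        rw [Finset.inf'_apply]
        apply le_antisymm
        · obtain ⟨y, hy⟩ := he x
          have hyx : x ≠ y := fun e => (Finset.mem_erase.mp hy).1 e.symm
          calc (Finset.univ.erase x).inf' (he x) (fun y => F x y x) ≤ F x y x :=
                Finset.inf'_le _ hy
            _ = g x := (hFval x y hyx).1
        · apply Finset.le_inf'
          intro y hy
          have hyx : x ≠ y := fun e => (Finset.mem_erase.mp hy).1 e.symm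
          rw [(hFval x y hyx).1]
      have hhz : ∀ x z, z ≠ x → h x z = zero := by
        intro x z hzx
        rw [hh]
        simp only
        rw [Finset.inf'_apply]
        apply le_antisymm
        · have hz : z ∈ Finset.univ.erase x := Finset.mem_erase.mpr ⟨hzx, Finset.mem_univ z⟩
          calc (Finset.univ.erase x).inf' (he x) (fun y => F x y z) ≤ F x z z :=
                Finset.inf'_le _ hz
            _ = zero := (hFval x z (Ne.symm hzx)).2
        · exact hzle _
      have hsup : Finset.univ.sup' Finset.univ_nonempty h = g := by
        funext z
        rw [Finset.sup'_apply]
        apply le_antisymm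
        · apply Finset.sup'_le
          intro x _
          by_cases hzx : z = x
          · subst hzx; rw [hhx]
          · rw [hhz x z hzx]; exact hzle _
        · calc g z = h z z := (hhx z).symm
            _ ≤ _ := Finset.le_sup' (fun x => h x z) (Finset.mem_univ z)
      rw [← hsup]
      exact Finset.sup'_mem (↑τ) (fun a ha b hb => hτ.2.2.1 a ha b hb) _ _ _
        (fun x _ => hhτ x)
    rw [htu, Finset.card_univ, Fintype.card_fun, Fintype.card_fin, Fintype.card_fin]
  · right
    push_neg at hfull
    obtain ⟨x, y, hxy, a, b, hab⟩ := hfull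
    classical
    set S : Finset (Fin n → Fin m) := Finset.univ.filter (fun f => f x = a ∧ f y = b) with hS
    have hτS : τ ⊆ Finset.univ \ S := by
      intro f hf
      rw [Finset.mem_sdiff]
      refine ⟨Finset.mem_univ f, ?_⟩
      rw [hS, Finset.mem_filter]
      rintro ⟨-, h1, h2⟩
      exact hab f hf h1 h2
    have hScard : m ^ (n - 2) ≤ S.card := by
      have inj : Function.Injective
          (fun (g : {z : Fin n // z ≠ x ∧ z ≠ y} → Fin m) =>
            (⟨fun z => if h1 : z = x then a else if h2 : z = y then b else g ⟨z, h1, h2⟩,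
              by rw [hS, Finset.mem_filter]; exact ⟨Finset.mem_univ _, by simp, by
                simp only [dif_neg (fun h : y = x => hxy h.symm)]; simp⟩⟩ : {f // f ∈ S})) := by
        intro g1 g2 hg
        funext ⟨z, hz1, hz2⟩
        have := congrArg (fun f => f.1 z) hg
        simpa [hz1, hz2] using this
      have := Fintype.card_le_of_injective _ inj
      rw [Fintype.card_fun, Fintype.card_fin, Fintype.card_coe] at this
      have hcard : Fintype.card {z : Fin n // z ≠ x ∧ z ≠ y} = n - 2 := by
        have : ∀ z : Fin n, (z ≠ x ∧ z ≠ y) ↔ z ∈ ({x, y} : Finset (Fin n))ᶜ := by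
          intro z; simp [not_or]
        rw [Fintype.card_subtype]
        have : Finset.univ.filter (fun z => z ≠ x ∧ z ≠ y) = ({x, y} : Finset (Fin n))ᶜ := by
          ext z; simp [not_or]
        rw [this, Finset.card_compl, Fintype.card_fin,
          Finset.card_insert_of_notMem (by simp [hxy]), Finset.card_singleton]
      rw [hcard] at this
      exact this
    calc τ.card ≤ (Finset.univ \ S).card := Finset.card_le_card hτS
      _ = m ^ n - S.card := by
          rw [Finset.card_sdiff_of_subset (Finset.subset_univ S), Finset.card_univ,
            Fintype.card_fun, Fintype.card_fin, Fintype.card_fin]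
      _ ≤ m ^ n - m ^ (n - 2) := Nat.sub_le_sub_left hScard _

theorem biTauF_gap (n m k : ℕ) (hm : 2 ≤ m) (hnm : m ≤ n)
    (h₁ : m ^ n - m ^ (n - 2) < k) (h₂ : k < m ^ n) :
    biTauF n m k (by omega) = 0 := by
  have hn2 : 2 ≤ n := le_trans hm hnm
  have hempty : IsEmpty {τ : Finset (Fin n → Fin m) //
      IsFuzzyTopology (show m ≠ 0 by omega) τ ∧ τ.card = k} := by
    constructor
    rintro ⟨τ, hτ, hk⟩
    rcases topology_card n m hm hn2 τ hτ with h | h <;> omega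
  unfold biTauF
  rw [Nat.card_eq_zero]
  exact Or.inl inferInstance
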